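/- In a triangulated category, a small coproduct of distinguished triangles is a distinguished triangle: if (a_λ → b_λ → c_λ → a_λ[1]) is a family of distinguished triangles and the coproducts ⊕a_λ, ⊕b_λ, ⊕c_λ exist, then (⊕a_λ → ⊕b_λ → ⊕c_λ → (⊕a_λ)[1]) is a distinguished triangle, where the connecting map is the composite of ⊕h_λ with the canonical isomorphism ⊕(a_λ[1]) ≅ (⊕a_λ)[1]. -/

import Mathlib

open CategoryTheory CategoryTheory.Limits CategoryTheory.Pretriangulated CategoryTheory.Category

/-- In a (pre)triangulated category, a small coproduct of distinguished triangles is a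
distinguished triangle: given a family of distinguished triangles
`a_λ → b_λ → c_λ → a_λ[1]` such that the coproducts `⊕ a_λ`, `⊕ b_λ`, `⊕ c_λ` exist,
the triangle `⊕ a_λ → ⊕ b_λ → ⊕ c_λ → (⊕ a_λ)[1]`, whose connecting map is the composite
of `⊕ h_λ` with the canonical map `⊕ (a_λ[1]) ⟶ (⊕ a_λ)[1]`, is distinguished. -/
theorem coproduct_of_distinguished_triangles_distinguished
    {C : Type*} [Category C] [HasZeroObject C] [Preadditive C] [HasShift C ℤ]
    [∀ n : ℤ, (shiftFunctor C n).Additive] [Pretriangulated C]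
    {J : Type*} (T : J → Triangle C) (hT : ∀ j, T j ∈ distTriang C)
    [HasCoproduct fun j => (T j).obj₁] [HasCoproduct fun j => (T j).obj₂]
    [HasCoproduct fun j => (T j).obj₃] [HasCoproduct fun j => (T j).obj₁⟦(1 : ℤ)⟧] :
    Triangle.mk (Limits.Sigma.map fun j => (T j).mor₁) (Limits.Sigma.map fun j => (T j).mor₂)
      ((Limits.Sigma.map fun j => (T j).mor₃) ≫
        sigmaComparison (shiftFunctor C (1 : ℤ)) fun j => (T j).obj₁) ∈
      distTriang C := by
  have hb : HasCoproduct (fun j => (T j).obj₂⟦(1 : ℤ)⟧) :=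
    ⟨⟨_, isColimitCofanMkObjOfIsColimit (shiftFunctor C (1 : ℤ)) _ _
      (coproductIsCoproduct (fun j => (T j).obj₂))⟩⟩
  set S : Triangle C := Triangle.mk (Limits.Sigma.map fun j => (T j).mor₁)
      (Limits.Sigma.map fun j => (T j).mor₂)
      ((Limits.Sigma.map fun j => (T j).mor₃) ≫
        sigmaComparison (shiftFunctor C (1 : ℤ)) fun j => (T j).obj₁) with hS
  -- compatibilities of the structure maps of `S` with the coproduct inclusions
  have hι₁ : ∀ j, Sigma.ι (fun j => (T j).obj₁) j ≫ S.mor₁ =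
      (T j).mor₁ ≫ Sigma.ι (fun j => (T j).obj₂) j := fun j => by
    dsimp only [S, Triangle.mk]
    rw [Sigma.ι_map]
  have hι₂ : ∀ j, Sigma.ι (fun j => (T j).obj₂) j ≫ S.mor₂ =
      (T j).mor₂ ≫ Sigma.ι (fun j => (T j).obj₃) j := fun j => by
    dsimp only [S, Triangle.mk]
    rw [Sigma.ι_map]
  have hι₃ : ∀ j, Sigma.ι (fun j => (T j).obj₃) j ≫ S.mor₃ =
      (T j).mor₃ ≫ (Sigma.ι (fun j => (T j).obj₁) j)⟦(1 : ℤ)⟧' := fun j => by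
    dsimp only [S, Triangle.mk]
    simp only [Sigma.ι_map_assoc, ι_comp_sigmaComparison]
  obtain ⟨Z, f₂, f₃, hT'⟩ := distinguished_cocone_triangle S.mor₁
  set T' : Triangle C := Triangle.mk S.mor₁ f₂ f₃ with hT'def
  change T' ∈ distTriang C at hT'
  -- for each `j`, a morphism of triangles `T j ⟶ T'`
  let φ : ∀ j, T j ⟶ T' := fun j => completeDistinguishedTriangleMorphism _ _
    (hT j) hT' (Sigma.ι (fun j => (T j).obj₁) j) (Sigma.ι (fun j => (T j).obj₂) j)
    ((hι₁ j).symm)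
  have hφ₁ : ∀ j, (φ j).hom₁ = Sigma.ι (fun j => (T j).obj₁) j := fun j => rfl
  have hφ₂ : ∀ j, (φ j).hom₂ = Sigma.ι (fun j => (T j).obj₂) j := fun j => rfl
  -- the morphism `ψ : S.obj₃ ⟶ T'.obj₃`
  let ψ : S.obj₃ ⟶ T'.obj₃ := Sigma.desc (fun j => (φ j).hom₃)
  have hψ : ∀ j, Sigma.ι (fun j => (T j).obj₃) j ≫ ψ = (φ j).hom₃ := fun j => by
    simp [ψ]
  have comm₂ : S.mor₂ ≫ ψ = T'.mor₂ := by
    apply Sigma.hom_ext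
    intro j
    erw [← assoc, hι₂ j, assoc, hψ j]
    exact (φ j).comm₂
  have comm₃ : S.mor₃ = ψ ≫ T'.mor₃ := by
    apply Sigma.hom_ext
    intro j
    erw [hι₃ j, ← assoc, hψ j]
    exact (φ j).comm₃
  let φ' : S ⟶ T' :=
    { hom₁ := 𝟙 _
      hom₂ := 𝟙 _
      hom₃ := ψ
      comm₁ := by dsimp only [T', Triangle.mk]; rw [id_comp, comp_id]
      comm₂ := by erw [id_comp]; exact comm₂
      comm₃ := by erw [(shiftFunctor C (1 : ℤ)).map_id, comp_id]; exact comm₃ }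
  suffices hψiso : IsIso ψ by
    have h1 : IsIso φ'.hom₁ := by dsimp only [φ']; exact IsIso.id _
    have h2 : IsIso φ'.hom₂ := by dsimp only [φ']; exact IsIso.id _
    have h3 : IsIso φ'.hom₃ := hψiso
    have : IsIso φ' := by
      apply Triangle.isIso_of_isIsos
      all_goals assumption
    exact isomorphic_distinguished _ hT' _ (asIso φ')
  refine isIso_of_coyoneda_map_bijective _ (fun A => ⟨?_, ?_⟩)
  · -- injectivity
    suffices Epi ψ by
      intro a₁ a₂ ha
      simpa only [← cancel_epi ψ] using ha
    rw [Preadditive.epi_iff_cancel_zero]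
    intro A f hf
    have hf' : T'.mor₂ ≫ f = 0 := by erw [← comm₂, assoc, hf, comp_zero]
    obtain ⟨g, hg⟩ := T'.yoneda_exact₃ hT' f hf'
    have hSg : S.mor₃ ≫ g = 0 := by erw [comm₃, assoc, ← hg, hf]
    have hg' : ∀ j, (T j).mor₃ ≫ ((Sigma.ι (fun j => (T j).obj₁) j)⟦(1 : ℤ)⟧' ≫ g) = 0 := by
      intro j
      erw [← assoc, ← hι₃ j, assoc, hSg, comp_zero]
    have hg'' := fun j => ((T j).rotate).yoneda_exact₃ (rot_of_distTriang _ (hT j)) _ (hg' j)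
    let α := fun j => (hg'' j).choose
    have hα : ∀ j, (Sigma.ι (fun j => (T j).obj₁) j)⟦(1 : ℤ)⟧' ≫ g =
        (T j).rotate.mor₃ ≫ α j := fun j => (hg'' j).choose_spec
    -- build `β : (∐ obj₂)⟦1⟧ ⟶ A`
    let β : (∐ fun j => (T j).obj₂)⟦(1 : ℤ)⟧ ⟶ A :=
      inv (sigmaComparison (shiftFunctor C (1 : ℤ)) (fun j => (T j).obj₂)) ≫
        Sigma.desc (fun j => -(α j))
    have hβ : ∀ j, (Sigma.ι (fun j => (T j).obj₂) j)⟦(1 : ℤ)⟧' ≫ β = -(α j) := fun j => by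
      rw [← ι_comp_sigmaComparison (shiftFunctor C (1 : ℤ)), assoc]
      dsimp only [β]
      rw [IsIso.hom_inv_id_assoc]
      simp; rfl
    have hgβ : g = T'.mor₁⟦(1 : ℤ)⟧' ≫ β := by
      erw [← cancel_epi (sigmaComparison (shiftFunctor C (1 : ℤ)) (fun j => (T j).obj₁))]
      apply Sigma.hom_ext
      intro j
      erw [ι_comp_sigmaComparison_assoc, ι_comp_sigmaComparison_assoc]
      have h1 : T'.mor₁ = S.mor₁ := rfl
      erw [← Functor.map_comp_assoc, h1, hι₁ j, Functor.map_comp, assoc, hβ j,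
        Preadditive.comp_neg, hα j]
      have h2 : (T j).rotate.mor₃ = -((T j).mor₁⟦(1 : ℤ)⟧') := rfl
      erw [h2, Preadditive.neg_comp]; rfl
    erw [hg, hgβ, ← assoc]
    have h0 : T'.mor₃ ≫ T'.mor₁⟦(1 : ℤ)⟧' = 0 := comp_distTriang_mor_zero₃₁ _ hT'
    erw [h0, zero_comp]
  · -- surjectivity
    intro a
    have hz : T'.mor₁ ≫ S.mor₂ ≫ a = 0 := by
      have h12 : T'.mor₁ ≫ S.mor₂ = 0 := by
        apply Sigma.hom_ext
        intro j
        have h1 : T'.mor₁ = S.mor₁ := rfl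
        erw [← assoc, h1, hι₁ j, assoc, hι₂ j, ← assoc,
          comp_distTriang_mor_zero₁₂ _ (hT j), zero_comp, comp_zero]
      erw [← assoc, h12, zero_comp]
    obtain ⟨a', ha'⟩ := T'.yoneda_exact₂ hT' (S.mor₂ ≫ a) hz
    have ha'' := fun j => (T j).yoneda_exact₃ (hT j)
      (Sigma.ι (fun j => (T j).obj₃) j ≫ (a - ψ ≫ a')) (by
        erw [← assoc, ← hι₂ j, assoc, Preadditive.comp_sub, ha', ← assoc, comm₂, sub_self, comp_zero])
    let b := fun j => (ha'' j).choose
    have hb' : ∀ j, Sigma.ι (fun j => (T j).obj₃) j ≫ (a - ψ ≫ a') =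
        (T j).mor₃ ≫ b j := fun j => (ha'' j).choose_spec
    let β : (∐ fun j => (T j).obj₁)⟦(1 : ℤ)⟧ ⟶ A :=
      inv (sigmaComparison (shiftFunctor C (1 : ℤ)) (fun j => (T j).obj₁)) ≫ Sigma.desc b
    have hβ : ∀ j, (Sigma.ι (fun j => (T j).obj₁) j)⟦(1 : ℤ)⟧' ≫ β = b j := fun j => by
      rw [← ι_comp_sigmaComparison (shiftFunctor C (1 : ℤ)), assoc]
      dsimp only [β]
      rw [IsIso.hom_inv_id_assoc]
      simp [b]
    have hd : a - ψ ≫ a' = S.mor₃ ≫ β := by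
      apply Sigma.hom_ext
      intro j
      erw [← assoc, hι₃ j, assoc, hβ j, hb' j]
    refine ⟨a' + T'.mor₃ ≫ β, ?_⟩
    show ψ ≫ (a' + T'.mor₃ ≫ β) = a
    erw [Preadditive.comp_add, ← assoc, ← comm₃, ← hd]
    abel
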